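/- Let u, v ∈ ℂ with Im(u/v) ≠ 0, and let α, β ∈ ℝ be the unique reals with αu + βv = 1. Set ξ = e^{2πiu} and η = e^{2πiv}. Then the multiplicative subgroup G = ⟨ξ, η⟩ of ℂ* is dense in ℂ (equivalently, its closure contains all of ℂ, 0 being a limit point) if and only if for all integers k, l, m, the equation kα + lβ + m = 0 implies k = l = m = 0. -/

import Mathlib

noncomputable section

namespace Kron10

/-- The subgroup `ℤ(α,β) + ℤ²` of `ℝ × ℝ`. -/
def S (α β : ℝ) : AddSubgroup (ℝ × ℝ) where
  carrier := {p | ∃ k n m : ℤ, p = ((n : ℝ) + (k : ℝ) * α, (m : ℝ) + (k : ℝ) * β)}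
  zero_mem' := ⟨0, 0, 0, by simp; rfl⟩
  add_mem' := by
    rintro p q ⟨k, n, m, rfl⟩ ⟨k', n', m', rfl⟩
    refine ⟨k + k', n + n', m + m', ?_⟩
    rw [Prod.mk_add_mk, Prod.mk.injEq]
    push_cast
    constructor <;> ring
  neg_mem' := by
    rintro p ⟨k, n, m, rfl⟩
    refine ⟨-k, -n, -m, ?_⟩
    rw [Prod.neg_mk, Prod.mk.injEq]
    push_cast
    constructor <;> ring

lemma mem_S {α β : ℝ} (k n m : ℤ) :
    (((n : ℝ) + (k : ℝ) * α, (m : ℝ) + (k : ℝ) * β) : ℝ × ℝ) ∈ S α β := ⟨k, n, m, rfl⟩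

lemma indep_of_dense {α β : ℝ} (hd : Dense (S α β : Set (ℝ × ℝ))) :
    ∀ k l m : ℤ, (k : ℝ) * α + (l : ℝ) * β + (m : ℝ) = 0 → k = 0 ∧ l = 0 ∧ m = 0 := by
  intro k l m hrel
  by_cases hkl : k = 0 ∧ l = 0
  · refine ⟨hkl.1, hkl.2, ?_⟩
    have : (m : ℝ) = 0 := by
      rw [hkl.1, hkl.2] at hrel; push_cast at hrel; linarith
    exact_mod_cast this
  · exfalso
    set φ : ℝ × ℝ → ℝ := fun p => (k : ℝ) * p.1 + (l : ℝ) * p.2 with hφ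
    have hcont : Continuous φ := by fun_prop
    have himage : φ '' (S α β : Set (ℝ × ℝ)) ⊆ Set.range (Int.cast : ℤ → ℝ) := by
      rintro x ⟨p, ⟨k', n, m', rfl⟩, rfl⟩
      refine ⟨k * n + l * m' - k' * m, ?_⟩
      have h2 : (k : ℝ) * α + (l : ℝ) * β = -(m : ℝ) := by linarith
      simp only [hφ]
      push_cast
      linear_combination (-(k' : ℝ)) * hrel
    have hsurj : Set.range φ = Set.univ := by
      rcases not_and_or.mp hkl with hk | hl
      · refine Set.range_eq_univ.mpr fun c => ⟨(c / k, 0), ?_⟩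
        have hk' : (k : ℝ) ≠ 0 := Int.cast_ne_zero.mpr hk
        simp only [hφ]
        field_simp
        simp
      · refine Set.range_eq_univ.mpr fun c => ⟨(0, c / l), ?_⟩
        have hl' : (l : ℝ) ≠ 0 := Int.cast_ne_zero.mpr hl
        simp only [hφ]
        field_simp
        simp
    have hsub : Set.range φ ⊆ closure (φ '' (S α β : Set (ℝ × ℝ))) := by
      rw [← Set.image_univ, ← hd.closure_eq]
      exact (image_closure_subset_closure_image hcont).trans
        (closure_mono (Set.image_mono (by simp)))
    have : (1/2 : ℝ) ∈ Set.range (Int.cast : ℤ → ℝ) := by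
      have h12 : (1/2 : ℝ) ∈ closure (φ '' (S α β : Set (ℝ × ℝ))) := by
        apply hsub; rw [hsurj]; trivial
      have := closure_mono himage h12
      rwa [Int.isClosedEmbedding_coe_real.isClosed_range.closure_eq] at this
    obtain ⟨j, hj⟩ := this
    have h2j : ((2 * j : ℤ) : ℝ) = ((1 : ℤ) : ℝ) := by push_cast; linarith
    have := Int.cast_injective (α := ℝ) h2j
    omega

/-- `ℤβ + ℤ` is dense in `ℝ`. -/
lemma dense_D (hind : ∀ k l m : ℤ, (k : ℝ) * α + (l : ℝ) * β + (m : ℝ) = 0 → k = 0 ∧ l = 0 ∧ m = 0) :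
    Dense {y : ℝ | ∃ l m : ℤ, y = (l : ℝ) * β + (m : ℝ)} := by
  set D : AddSubgroup ℝ :=
    { carrier := {y : ℝ | ∃ l m : ℤ, y = (l : ℝ) * β + (m : ℝ)}
      zero_mem' := ⟨0, 0, by simp⟩
      add_mem' := by
        rintro x y ⟨l, m, rfl⟩ ⟨l', m', rfl⟩
        exact ⟨l + l', m + m', by push_cast; ring⟩
      neg_mem' := by
        rintro x ⟨l, m, rfl⟩
        exact ⟨-l, -m, by push_cast; ring⟩ } with hD
  rcases D.dense_or_cyclic with h | ⟨a, ha⟩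
  · exact h
  · exfalso
    have hβ : β ∈ D := ⟨1, 0, by simp⟩
    have h1 : (1 : ℝ) ∈ D := ⟨0, 1, by simp⟩
    rw [ha] at hβ h1
    obtain ⟨p, hp⟩ := AddSubgroup.mem_closure_singleton.mp hβ
    obtain ⟨q, hq⟩ := AddSubgroup.mem_closure_singleton.mp h1
    have hrel : ((0 : ℤ) : ℝ) * α + (q : ℝ) * β + ((-p : ℤ) : ℝ) = 0 := by
      push_cast
      rw [zsmul_eq_mul] at hp hq
      linear_combination (-(q : ℝ)) * hp + (p : ℝ) * hq
    obtain ⟨-, hq0, -⟩ := hind 0 q (-p) hrel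
    rw [hq0] at hq
    simp at hq


/-- Helper: if `x = k * a` for an integer `k` and `|x| < a` with `a > 0`, then `x = 0`. -/
lemma small_int_mul {a x : ℝ} (ha : 0 < a) (k : ℤ) (hx : x = (k : ℝ) * a) (hlt : |x| < a) :
    x = 0 := by
  have h1 : |(k : ℝ)| * a < a := by rwa [hx, abs_mul, abs_of_pos ha] at hlt
  have h2 : |(k : ℝ)| < 1 := by nlinarith [abs_nonneg (k : ℝ)]
  have h3 : (k : ℝ) < 1 ∧ -1 < (k : ℝ) := ⟨lt_of_le_of_lt (le_abs_self _) h2,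
    lt_of_lt_of_le (neg_lt_neg h2) (neg_abs_le _)⟩
  have h4 : k = 0 := by
    have ha' : k < 1 := by exact_mod_cast h3.1
    have hb' : -1 < k := by exact_mod_cast h3.2
    omega
  simp [hx, h4]

set_option maxHeartbeats 2000000 in
lemma cyclic_case {α β : ℝ} (H : AddSubgroup (ℝ × ℝ)) (hclosed : IsClosed (H : Set (ℝ × ℝ)))
    (hθ : ((α, β) : ℝ × ℝ) ∈ H) (he2 : (((0 : ℝ), (1 : ℝ)) : ℝ × ℝ) ∈ H)
    (proj : ∀ y : ℝ, ∃ x : ℝ, ((x, y) : ℝ × ℝ) ∈ H)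
    (a : ℝ) (ha : 0 < a) (hA : ∀ x : ℝ, ((x, (0 : ℝ)) : ℝ × ℝ) ∈ H ↔ ∃ k : ℤ, x = (k : ℝ) * a)
    (N : ℤ) (hN : (N : ℝ) * a = 1)
    (hind : ∀ k l m : ℤ, (k : ℝ) * α + (l : ℝ) * β + (m : ℝ) = 0 → k = 0 ∧ l = 0 ∧ m = 0) :
    False := by
  classical
  -- difference of two points of `H` with the same second coordinate lies in `aℤ`
  have hAmem : ∀ x x' y : ℝ, ((x, y) : ℝ × ℝ) ∈ H → ((x', y) : ℝ × ℝ) ∈ H →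
      ∃ k : ℤ, x - x' = (k : ℝ) * a := by
    intro x x' y h1 h2
    have h3 : ((x - x', (0 : ℝ)) : ℝ × ℝ) ∈ H := by
      have := H.sub_mem h1 h2
      simpa [Prod.mk_sub_mk] using this
    exact (hA _).mp h3
  -- the canonical representative function
  have hex : ∀ y : ℝ, ∃ x : ℝ, ((x, y) : ℝ × ℝ) ∈ H ∧ -(a/2) ≤ x ∧ x < a/2 := by
    intro y
    obtain ⟨x₀, hx₀⟩ := proj y
    set c : ℤ := ⌊x₀ / a + 1/2⌋ with hc
    refine ⟨x₀ - (c : ℝ) * a, ?_, ?_, ?_⟩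
    · have hca : (((c : ℝ) * a, (0 : ℝ)) : ℝ × ℝ) ∈ H := (hA _).mpr ⟨c, rfl⟩
      have := H.sub_mem hx₀ hca
      simpa [Prod.mk_sub_mk] using this
    · have h1 : (c : ℝ) ≤ x₀ / a + 1/2 := Int.floor_le _
      have h2 : (x₀ / a) * a = x₀ := div_mul_cancel₀ _ (ne_of_gt ha)
      nlinarith
    · have h1 : x₀ / a + 1/2 < (c : ℝ) + 1 := Int.lt_floor_add_one _
      have h2 : (x₀ / a) * a = x₀ := div_mul_cancel₀ _ (ne_of_gt ha)
      nlinarith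
  choose f hfH hfl hfu using hex
  have hfabs : ∀ y, |f y| ≤ a/2 := fun y => abs_le.mpr ⟨by linarith [hfl y], le_of_lt (hfu y)⟩
  have uniq : ∀ x y : ℝ, ((x, y) : ℝ × ℝ) ∈ H → -(a/2) ≤ x → x < a/2 → x = f y := by
    intro x y hx h1 h2
    obtain ⟨k, hk⟩ := hAmem x (f y) y hx (hfH y)
    have : x - f y = 0 := small_int_mul ha k hk (by
      rw [abs_lt]; constructor <;> [linarith [hfu y]; linarith [hfl y]])
    linarith
  have hf0 : f 0 = 0 :=
    (uniq 0 0 (by exact H.zero_mem) (by linarith) (by linarith)).symm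
  -- quasi-additivity
  have q1 : ∀ y z : ℝ, ∃ k : ℤ, f (y + z) - (f y + f z) = (k : ℝ) * a := by
    intro y z
    have hsum : ((f y + f z, y + z) : ℝ × ℝ) ∈ H := by
      have := H.add_mem (hfH y) (hfH z)
      simpa [Prod.mk_add_mk] using this
    exact hAmem _ _ _ (hfH (y + z)) hsum
  -- integer scaling
  have q2 : ∀ (n : ℤ) (y : ℝ), ∃ k : ℤ, f ((n : ℝ) * y) - (n : ℝ) * f y = (k : ℝ) * a := by
    intro n y
    have hsm : (((n : ℝ) * f y, (n : ℝ) * y) : ℝ × ℝ) ∈ H := by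
      have := H.zsmul_mem (hfH y) n
      simpa [Prod.smul_mk, zsmul_eq_mul] using this
    exact hAmem _ _ _ (hfH ((n : ℝ) * y)) hsm
  -- continuity at 0
  have cont0 : ∀ ε : ℝ, 0 < ε → ε < a/2 → ∃ δ : ℝ, 0 < δ ∧ ∀ y : ℝ, |y| < δ → |f y| < ε := by
    intro ε hε hεa
    by_contra hcon
    push_neg at hcon
    have hseq : ∀ j : ℕ, ∃ y : ℝ, |y| < 1/(j+1) ∧ ε ≤ |f y| := by
      intro j
      obtain ⟨y, hy1, hy2⟩ := hcon (1/(j+1)) (by positivity)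
      exact ⟨y, hy1, hy2⟩
    choose y hy hyε using hseq
    have hy0 : Filter.Tendsto y Filter.atTop (nhds 0) := by
      apply squeeze_zero_norm (fun j => le_of_lt (hy j))
      exact tendsto_one_div_add_atTop_nhds_zero_nat
    have hfy : ∀ j, f (y j) ∈ Set.Icc (-(a/2)) (a/2) := fun j =>
      ⟨by linarith [hfl (y j)], by linarith [hfu (y j)]⟩
    obtain ⟨x', hx'mem, φ, hφ, hφt⟩ := (isCompact_Icc).tendsto_subseq hfy
    have hxy : Filter.Tendsto (fun j => ((f (y (φ j)), y (φ j)) : ℝ × ℝ))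
        Filter.atTop (nhds (x', 0)) :=
      Filter.Tendsto.prodMk_nhds hφt (hy0.comp hφ.tendsto_atTop)
    have hx'H : ((x', (0 : ℝ)) : ℝ × ℝ) ∈ H :=
      hclosed.mem_of_tendsto hxy (Filter.Eventually.of_forall fun j => hfH (y (φ j)))
    obtain ⟨k, hk⟩ := (hA _).mp hx'H
    have hx'ε : ε ≤ |x'| := by
      have habs : Filter.Tendsto (fun j => |f (y (φ j))|) Filter.atTop (nhds |x'|) :=
        hφt.abs
      exact ge_of_tendsto habs (Filter.Eventually.of_forall fun j => hyε (φ j))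
    have hx'0 : x' ≠ 0 := fun h => by rw [h] at hx'ε; simp at hx'ε; linarith
    have hk0 : k ≠ 0 := fun h => hx'0 (by simp [hk, h])
    have h1k : (1 : ℝ) ≤ |(k : ℝ)| := by
      have h1 : (1 : ℤ) ≤ |k| := Int.one_le_abs hk0
      calc (1 : ℝ) ≤ ((|k| : ℤ) : ℝ) := by exact_mod_cast h1
      _ = |(k : ℝ)| := by push_cast; ring
    have : a ≤ |x'| := by
      rw [hk, abs_mul, abs_of_pos ha]
      nlinarith
    have : |x'| ≤ a/2 := abs_le.mpr ⟨hx'mem.1, hx'mem.2⟩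
    linarith
  -- local additivity
  obtain ⟨δ, hδpos, hδ⟩ := cont0 (a/8) (by positivity) (by linarith)
  set δ₁ : ℝ := δ/2 with hδ₁
  have hδ₁pos : 0 < δ₁ := by positivity
  have hadd : ∀ y z : ℝ, |y| < δ₁ → |z| < δ₁ → f (y + z) = f y + f z := by
    intro y z hy hz
    obtain ⟨k, hk⟩ := q1 y z
    have h1 : |f y| < a/8 := hδ y (by rw [hδ₁] at hy; linarith [abs_nonneg y])
    have h2 : |f z| < a/8 := hδ z (by rw [hδ₁] at hz; linarith [abs_nonneg z])
    have h3 : |f (y + z)| < a/8 := hδ (y + z) (by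
      calc |y + z| ≤ |y| + |z| := abs_add_le _ _
      _ < δ := by rw [hδ₁] at hy hz; linarith)
    have h4 : f (y + z) - (f y + f z) = 0 := small_int_mul ha k hk (by
      calc |f (y + z) - (f y + f z)| ≤ |f (y+z)| + |f y + f z| := abs_sub _ _
      _ ≤ |f (y+z)| + (|f y| + |f z|) := by linarith [abs_add_le (f y) (f z)]
      _ < a := by linarith)
    linarith
  -- natural scaling
  have natscale : ∀ (n : ℕ) (w : ℝ), |(n : ℝ) * w| < δ₁ → |w| < δ₁ →
      f ((n : ℝ) * w) = (n : ℝ) * f w := by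
    intro n
    induction n with
    | zero => intro w _ _; simpa using hf0
    | succ n ih =>
      intro w hnw hw
      have hmono : |(n : ℝ) * w| ≤ |((n : ℕ) + 1 : ℝ) * w| := by
        rw [abs_mul, abs_mul]
        have : |(n : ℝ)| ≤ |((n : ℕ) + 1 : ℝ)| := by
          rw [abs_of_nonneg (by positivity), abs_of_nonneg (by positivity)]; linarith
        exact mul_le_mul_of_nonneg_right this (abs_nonneg w)
      have h1 : ((n : ℕ) + 1 : ℝ) * w = (n : ℝ) * w + w := by push_cast; ring
      have h2 : f (((n : ℕ) + 1 : ℝ) * w) = f ((n : ℝ) * w) + f w := by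
        rw [h1]
        exact hadd _ _ (lt_of_le_of_lt hmono (by push_cast at hnw ⊢; exact hnw)) hw
      push_cast at h2 ⊢
      rw [h2, ih w (lt_of_le_of_lt hmono (by push_cast at hnw ⊢; exact hnw)) hw]
      ring
  -- linearity on a small interval (key limit argument)
  have keylin : ∀ y z : ℝ, 0 < z → z < y → y < δ₁ → f z * y = f y * z := by
    intro y z hz hzy hy
    have hy0 : 0 < y := lt_trans hz hzy
    set p : ℕ → ℕ := fun q => (⌊(q : ℝ) * z / y⌋).toNat with hp
    have hpfloor : ∀ q : ℕ, ((p q : ℕ) : ℝ) ≤ (q : ℝ) * z / y ∧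
        (q : ℝ) * z / y < (p q : ℕ) + 1 := by
      intro q
      have hnn : (0 : ℝ) ≤ (q : ℝ) * z / y := by positivity
      have h0 : (0 : ℤ) ≤ ⌊(q : ℝ) * z / y⌋ := Int.floor_nonneg.mpr hnn
      have hth : ((p q : ℕ) : ℤ) = ⌊(q : ℝ) * z / y⌋ := by
        rw [hp]; exact Int.toNat_of_nonneg h0
      have hcast : ((p q : ℕ) : ℝ) = ((⌊(q : ℝ) * z / y⌋ : ℤ) : ℝ) := by
        exact_mod_cast congrArg (fun i : ℤ => (i : ℝ)) hth
      exact ⟨hcast ▸ Int.floor_le _, hcast ▸ Int.lt_floor_add_one _⟩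
    -- the remainder sequence
    set r : ℕ → ℝ := fun q => z - (p q : ℝ) * (y / q) with hr
    have hkey : ∀ q : ℕ, 1 ≤ q → f z - ((p q : ℝ) / q) * f y = f (r q) ∧
        0 ≤ r q ∧ r q < y / q := by
      intro q hq
      have hq0 : (0 : ℝ) < q := by exact_mod_cast hq
      have hyq : 0 < y / q := by positivity
      have h1q : (1 : ℝ) ≤ (q : ℝ) := by exact_mod_cast hq
      have hyqy : y / q ≤ y := by
        rw [div_le_iff₀ hq0]
        nlinarith [mul_le_mul_of_nonneg_left h1q (le_of_lt hy0)]
      have hpb : (p q : ℝ) * (y / q) ≤ z := by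
        have := (hpfloor q).1
        calc (p q : ℝ) * (y / q) ≤ ((q : ℝ) * z / y) * (y / q) :=
          mul_le_mul_of_nonneg_right this (le_of_lt hyq)
        _ = z := by field_simp
      have hpb2 : z < ((p q : ℝ) + 1) * (y / q) := by
        have := (hpfloor q).2
        calc z = ((q : ℝ) * z / y) * (y / q) := by field_simp
        _ < ((p q : ℝ) + 1) * (y / q) := by
          apply mul_lt_mul_of_pos_right _ hyq
          exact_mod_cast this
      have hr0 : 0 ≤ r q := by rw [hr]; simp only; linarith
      have hrlt : r q < y / q := by rw [hr]; simp only; nlinarith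
      -- f y = q * f (y/q)
      have hfyq : f y = (q : ℝ) * f (y / q) := by
        have := natscale q (y / q) (by
          rw [mul_div_cancel₀ _ (ne_of_gt hq0)]
          rw [abs_of_pos hy0]; exact hy) (by
          rw [abs_of_pos hyq]; linarith)
        rw [mul_div_cancel₀ _ (ne_of_gt hq0)] at this
        exact this
      -- f (p * (y/q)) = p * f (y/q)
      have hfp : f ((p q : ℝ) * (y / q)) = (p q : ℝ) * f (y / q) := by
        apply natscale
        · rw [abs_of_nonneg (by positivity)]
          calc (p q : ℝ) * (y / q) ≤ z := hpb
          _ < δ₁ := lt_trans hzy hy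
        · rw [abs_of_pos hyq]; linarith
      -- split f z
      have hsplit : f z = f ((p q : ℝ) * (y / q)) + f (r q) := by
        have : z = (p q : ℝ) * (y / q) + r q := by rw [hr]; ring
        rw [this]
        apply hadd
        · rw [abs_of_nonneg (by positivity)]
          calc (p q : ℝ) * (y / q) ≤ z := hpb
          _ < δ₁ := lt_trans hzy hy
        · rw [abs_of_nonneg hr0]
          calc r q < y / q := hrlt
          _ ≤ y := hyqy
          _ < δ₁ := hy
      refine ⟨?_, hr0, hrlt⟩
      rw [hsplit, hfp, hfyq]
      have : ((p q : ℝ) / q) * ((q : ℝ) * f (y / q)) = (p q : ℝ) * f (y / q) := by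
        field_simp
      rw [this]; ring
    -- limits
    have hrq0 : Filter.Tendsto (fun q : ℕ => f (r q)) Filter.atTop (nhds 0) := by
      rw [Metric.tendsto_atTop]
      intro ε hε
      obtain ⟨δ', hδ'pos, hδ'⟩ := cont0 (min ε (a/4)) (by positivity) (by
        have : min ε (a/4) ≤ a/4 := min_le_right _ _
        linarith)
      have hyq0 : Filter.Tendsto (fun q : ℕ => y / q) Filter.atTop (nhds 0) :=
        tendsto_const_div_atTop_nhds_zero_nat y
      rw [Metric.tendsto_atTop] at hyq0
      obtain ⟨Q, hQ⟩ := hyq0 δ' hδ'pos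
      refine ⟨max Q 1, fun q hq => ?_⟩
      have hq1 : 1 ≤ q := le_trans (le_max_right _ _) hq
      have hqQ : Q ≤ q := le_trans (le_max_left _ _) hq
      obtain ⟨-, hr0, hrlt⟩ := hkey q hq1
      have hyqδ : y / q < δ' := by
        have := hQ q hqQ
        rw [Real.dist_eq, sub_zero] at this
        calc y / q ≤ |y / q| := le_abs_self _
        _ < δ' := this
      have : |f (r q)| < min ε (a/4) := hδ' (r q) (by
        rw [abs_of_nonneg hr0]; exact lt_trans hrlt hyqδ)
      rw [Real.dist_eq, sub_zero]
      exact lt_of_lt_of_le this (min_le_left _ _)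
    have hpq : Filter.Tendsto (fun q : ℕ => (p q : ℝ) / q) Filter.atTop (nhds (z / y)) := by
      have hbound : ∀ q : ℕ, 1 ≤ q → 0 ≤ z / y - (p q : ℝ) / q ∧ z / y - (p q : ℝ) / q ≤ 1 / q := by
        intro q hq
        have hq0 : (0 : ℝ) < q := by exact_mod_cast hq
        have h1 := (hpfloor q).1
        have h2 := (hpfloor q).2
        constructor
        · rw [sub_nonneg, div_le_div_iff₀ hq0 hy0]
          have h3 : ((q : ℝ) * z / y) * y = z * q := by field_simp
          nlinarith [mul_le_mul_of_nonneg_right h1 (le_of_lt hy0)]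
        · have h3 : z / y ≤ ((p q : ℝ) + 1) / q := by
            rw [div_le_div_iff₀ hy0 hq0]
            have h4 : ((q : ℝ) * z / y) * y = z * q := by field_simp
            nlinarith [mul_le_mul_of_nonneg_right (le_of_lt h2) (le_of_lt hy0)]
          have h5 : ((p q : ℝ) + 1) / q = (p q : ℝ) / q + 1 / q := add_div _ _ _
          linarith [h3, h5]
      have hdiff : Filter.Tendsto (fun q : ℕ => z / y - (p q : ℝ) / q) Filter.atTop (nhds 0) := by
        apply squeeze_zero' (g := fun q : ℕ => 1 / (q : ℝ))
        · filter_upwards [Filter.eventually_ge_atTop 1] with q hq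
          exact (hbound q hq).1
        · filter_upwards [Filter.eventually_ge_atTop 1] with q hq
          exact (hbound q hq).2
        · exact tendsto_one_div_atTop_nhds_zero_nat
      have := (tendsto_const_nhds (x := z / y) (f := Filter.atTop (α := ℕ))).sub hdiff
      simpa using this
    have hlhs : Filter.Tendsto (fun q : ℕ => f z - ((p q : ℝ) / q) * f y) Filter.atTop
        (nhds (f z - (z / y) * f y)) :=
      (tendsto_const_nhds).sub (hpq.mul_const (f y))
    have heq : ∀ᶠ q : ℕ in Filter.atTop, f z - ((p q : ℝ) / q) * f y = f (r q) := by
      filter_upwards [Filter.eventually_ge_atTop 1] with q hq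
      exact (hkey q hq).1
    have : f z - (z / y) * f y = 0 :=
      tendsto_nhds_unique (hlhs.congr' heq) hrq0
    have hy0' : y ≠ 0 := ne_of_gt hy0
    field_simp at this
    linear_combination this
  -- linearity on a small interval around 0
  set y₀ : ℝ := δ₁ / 2 with hy₀
  have hy₀pos : 0 < y₀ := by positivity
  have hy₀δ : y₀ < δ₁ := by rw [hy₀]; linarith
  set t : ℝ := f y₀ / y₀ with ht
  have hlin : ∀ z : ℝ, |z| < y₀ → f z = t * z := by
    have hpos : ∀ z : ℝ, 0 < z → z < y₀ → f z = t * z := by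
      intro z hz hzy
      have := keylin y₀ z hz hzy hy₀δ
      rw [ht]
      field_simp
      linarith [this]
    intro z hz
    rcases lt_trichotomy z 0 with hneg | rfl | hposz
    · have hz' : 0 < -z := by linarith
      have hz'y : -z < y₀ := by rw [abs_of_neg hneg] at hz; linarith
      have h1 : f (-z) = t * (-z) := hpos (-z) hz' hz'y
      have h2 : f (z + -z) = f z + f (-z) := hadd z (-z)
        (lt_of_lt_of_le hz (le_of_lt hy₀δ)) (by
          rw [abs_neg]; exact lt_of_lt_of_le hz (le_of_lt hy₀δ))
      simp only [add_neg_cancel] at h2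
      rw [hf0] at h2
      have : f z = -f (-z) := by linarith
      rw [this, h1]; ring
    · rw [hf0]; ring
    · exact hpos z hposz (by rwa [abs_of_pos hposz] at hz)
  -- global structure
  have hglob : ∀ y : ℝ, ∃ k : ℤ, f y = t * y + (k : ℝ) * a := by
    intro y
    obtain ⟨n, hn⟩ := exists_nat_gt (|y| / y₀)
    have hn0 : 0 < n := by
      rcases Nat.eq_zero_or_pos n with h | h
      · subst h
        have hpos : (0 : ℝ) ≤ |y| / y₀ := by positivity
        simp only [Nat.cast_zero] at hn
        linarith
      · exact h
    have hn0' : (0 : ℝ) < n := by exact_mod_cast hn0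
    have hsmall : |y / n| < y₀ := by
      rw [abs_div, abs_of_pos hn0', div_lt_iff₀ hn0']
      calc |y| = (|y| / y₀) * y₀ := by field_simp
      _ < n * y₀ := by exact mul_lt_mul_of_pos_right hn hy₀pos
      _ = y₀ * n := by ring
    obtain ⟨k, hk⟩ := q2 (n : ℤ) (y / n)
    have hcast : ((n : ℤ) : ℝ) = (n : ℝ) := by push_cast; ring
    rw [hcast, mul_div_cancel₀ _ (ne_of_gt hn0')] at hk
    rw [hlin (y / n) hsmall] at hk
    refine ⟨k, ?_⟩
    have : (n : ℝ) * (t * (y / n)) = t * y := by field_simp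
    rw [this] at hk
    linarith
  -- relation for all elements of H
  have hrel : ∀ x y : ℝ, ((x, y) : ℝ × ℝ) ∈ H → ∃ k : ℤ, x = t * y + (k : ℝ) * a := by
    intro x y hxy
    obtain ⟨k₁, hk₁⟩ := hAmem x (f y) y hxy (hfH y)
    obtain ⟨k₂, hk₂⟩ := hglob y
    exact ⟨k₁ + k₂, by push_cast; linarith⟩
  -- final contradiction
  obtain ⟨k₁, hk₁⟩ := hrel 0 1 he2
  obtain ⟨k₂, hk₂⟩ := hrel α β hθ
  rw [mul_one] at hk₁
  have ht' : t = -(k₁ : ℝ) * a := by linarith [hk₁]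
  rw [ht'] at hk₂
  have hfinal : ((N : ℤ) : ℝ) * α + ((k₁ : ℤ) : ℝ) * β + ((-k₂ : ℤ) : ℝ) = 0 := by
    push_cast
    linear_combination (N : ℝ) * hk₂ + ((k₂ : ℝ) - (k₁ : ℝ) * β) * hN
  obtain ⟨hN0, -, -⟩ := hind N k₁ (-k₂) hfinal
  rw [hN0] at hN
  push_cast at hN
  linarith

lemma dense_of_indep {α β : ℝ}
    (hind : ∀ k l m : ℤ, (k : ℝ) * α + (l : ℝ) * β + (m : ℝ) = 0 → k = 0 ∧ l = 0 ∧ m = 0) :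
    Dense (S α β : Set (ℝ × ℝ)) := by
  classical
  set H : AddSubgroup (ℝ × ℝ) := (S α β).topologicalClosure with hH
  have hclosed : IsClosed (H : Set (ℝ × ℝ)) := AddSubgroup.isClosed_topologicalClosure _
  have hSH : ∀ p : ℝ × ℝ, p ∈ S α β → p ∈ H := fun p hp => (S α β).le_topologicalClosure hp
  have hθ : ((α, β) : ℝ × ℝ) ∈ H := by
    have := hSH _ (mem_S (α := α) (β := β) 1 0 0)
    simpa using this
  have he1 : (((1 : ℝ), (0 : ℝ)) : ℝ × ℝ) ∈ H := by
    have := hSH _ (mem_S (α := α) (β := β) 0 1 0)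
    simpa using this
  have he2 : (((0 : ℝ), (1 : ℝ)) : ℝ × ℝ) ∈ H := by
    have := hSH _ (mem_S (α := α) (β := β) 0 0 1)
    simpa using this
  -- every vertical line meets H
  have proj : ∀ y : ℝ, ∃ x : ℝ, ((x, y) : ℝ × ℝ) ∈ H := by
    intro y
    have hy : y ∈ closure {y : ℝ | ∃ l m : ℤ, y = (l : ℝ) * β + (m : ℝ)} :=
      (dense_D hind) y
    obtain ⟨w, hw, hwy⟩ := mem_closure_iff_seq_limit.mp hy
    choose l m hlm using hw
    set x : ℕ → ℝ := fun j => Int.fract ((l j : ℝ) * α) with hx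
    have hxH : ∀ j, ((x j, w j) : ℝ × ℝ) ∈ H := by
      intro j
      have := hSH _ (mem_S (α := α) (β := β) (l j) (-⌊(l j : ℝ) * α⌋) (m j))
      have heq : ((((-⌊(l j : ℝ) * α⌋ : ℤ) : ℝ) + (l j : ℝ) * α,
          ((m j : ℤ) : ℝ) + (l j : ℝ) * β) : ℝ × ℝ) = (x j, w j) := by
        rw [Prod.mk.injEq]
        constructor
        · simp only [hx, Int.fract]; push_cast; ring
        · rw [hlm j]; ring
      rwa [heq] at this
    have hxmem : ∀ j, x j ∈ Set.Icc (0 : ℝ) 1 :=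
      fun j => ⟨Int.fract_nonneg _, le_of_lt (Int.fract_lt_one _)⟩
    obtain ⟨x', hx'mem, φ, hφ, hφt⟩ := (isCompact_Icc).tendsto_subseq hxmem
    refine ⟨x', ?_⟩
    have hxy : Filter.Tendsto (fun j => ((x (φ j), w (φ j)) : ℝ × ℝ))
        Filter.atTop (nhds (x', y)) :=
      Filter.Tendsto.prodMk_nhds hφt (hwy.comp hφ.tendsto_atTop)
    exact hclosed.mem_of_tendsto hxy (Filter.Eventually.of_forall fun j => hxH (φ j))
  -- the subgroup of x with (x, 0) ∈ H
  set A : AddSubgroup ℝ := H.comap (AddMonoidHom.inl ℝ ℝ) with hA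
  have hAmem : ∀ x : ℝ, x ∈ A ↔ ((x, (0 : ℝ)) : ℝ × ℝ) ∈ H := fun x => Iff.rfl
  have hAclosed : IsClosed (A : Set ℝ) := by
    have : (A : Set ℝ) = (fun x : ℝ => ((x, (0 : ℝ)) : ℝ × ℝ)) ⁻¹' (H : Set (ℝ × ℝ)) := rfl
    rw [this]
    exact hclosed.preimage (continuous_id.prodMk continuous_const)
  rcases A.dense_or_cyclic with hdense | ⟨a₀, ha₀⟩
  · -- A dense hence A = ℝ, hence H = ⊤, hence S dense
    have hAall : ∀ x : ℝ, ((x, (0 : ℝ)) : ℝ × ℝ) ∈ H := by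
      intro x
      have : x ∈ closure (A : Set ℝ) := hdense x
      rwa [hAclosed.closure_eq] at this
    have hHall : ∀ p : ℝ × ℝ, p ∈ H := by
      intro p
      obtain ⟨x₀, hx₀⟩ := proj p.2
      have h1 : ((p.1 - x₀, (0 : ℝ)) : ℝ × ℝ) ∈ H := hAall _
      have := H.add_mem h1 hx₀
      simpa [Prod.mk_add_mk] using this
    rw [dense_iff_closure_eq]
    have : closure (S α β : Set (ℝ × ℝ)) = (H : Set (ℝ × ℝ)) :=
      (AddSubgroup.topologicalClosure_coe (s := S α β)).symm
    rw [this]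
    exact Set.eq_univ_iff_forall.mpr hHall
  · -- cyclic case: contradiction
    exfalso
    have h1A : (1 : ℝ) ∈ A := (hAmem 1).mpr he1
    rw [ha₀, AddSubgroup.mem_closure_singleton] at h1A
    obtain ⟨N', hN'⟩ := h1A
    rw [zsmul_eq_mul] at hN'
    have ha₀0 : a₀ ≠ 0 := by
      rintro rfl
      simp at hN'
    have habs : 0 < |a₀| := abs_pos.mpr ha₀0
    have hcases := abs_choice a₀
    have hAiff : ∀ x : ℝ, ((x, (0 : ℝ)) : ℝ × ℝ) ∈ H ↔ ∃ k : ℤ, x = (k : ℝ) * |a₀| := by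
      intro x
      rw [← hAmem, ha₀, AddSubgroup.mem_closure_singleton]
      constructor
      · rintro ⟨k, hk⟩
        rw [zsmul_eq_mul] at hk
        rcases hcases with h | h
        · exact ⟨k, by rw [h]; linarith⟩
        · exact ⟨-k, by rw [h]; push_cast; linarith⟩
      · rintro ⟨k, hk⟩
        rcases hcases with h | h
        · exact ⟨k, by rw [zsmul_eq_mul]; rw [h] at hk; linarith⟩
        · exact ⟨-k, by rw [zsmul_eq_mul]; rw [h] at hk; push_cast; linarith⟩
    have hNabs : ∃ N : ℤ, (N : ℝ) * |a₀| = 1 := by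
      rcases hcases with h | h
      · exact ⟨N', by rw [h]; linarith⟩
      · exact ⟨-N', by rw [h]; push_cast; linarith⟩
    obtain ⟨N, hN⟩ := hNabs
    exact cyclic_case H hclosed hθ he2 proj |a₀| habs hAiff N hN hind


end Kron10

end

open Complex

noncomputable section

theorem stmt_10 (u v : ℂ) (huv : (u / v).im ≠ 0)
    (α β : ℝ) (hαβ : (α : ℂ) * u + (β : ℂ) * v = 1)
    (ξ η : ℂ) (hξ : ξ = Complex.exp (2 * Real.pi * Complex.I * u))
    (hη : η = Complex.exp (2 * Real.pi * Complex.I * v)) :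
    Dense {z : ℂ | ∃ n m : ℤ, z = ξ ^ n * η ^ m} ↔
      ∀ k l m : ℤ, (k : ℝ) * α + (l : ℝ) * β + (m : ℝ) = 0 → k = 0 ∧ l = 0 ∧ m = 0 := by
  classical
  have hv : v ≠ 0 := by
    rintro rfl
    simp at huv
  -- the real-linear map T(x, y) = x•u + y•v
  set T : ℝ × ℝ →ₗ[ℝ] ℂ :=
    (LinearMap.fst ℝ ℝ ℝ).smulRight u + (LinearMap.snd ℝ ℝ ℝ).smulRight v with hT
  have hTapply : ∀ p : ℝ × ℝ, T p = (p.1 : ℂ) * u + (p.2 : ℂ) * v := by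
    intro p
    simp [hT, Complex.real_smul]
  have hTinj : Function.Injective T := by
    rw [injective_iff_map_eq_zero]
    intro p hp
    rw [hTapply] at hp
    by_cases h1 : p.1 = 0
    · rw [h1] at hp
      simp only [Complex.ofReal_zero, zero_mul, zero_add, mul_eq_zero] at hp
      rcases hp with hp | hp
      · have : p.2 = 0 := by exact_mod_cast hp
        exact Prod.ext h1 this
      · exact absurd hp hv
    · exfalso
      have h1' : (p.1 : ℂ) ≠ 0 := Complex.ofReal_ne_zero.mpr h1
      have hu : u / v = ((-(p.2 / p.1) : ℝ) : ℂ) := by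
        push_cast
        field_simp
        linear_combination hp
      rw [hu] at huv
      simp at huv
  have hTsurj : Function.Surjective T := by
    intro z
    obtain ⟨x, y, hxy⟩ : ∃ x y : ℝ, (x : ℂ) * (u / v) + (y : ℂ) = z / v := by
      refine ⟨(z / v).im / (u / v).im, (z / v).re - ((z / v).im / (u / v).im) * (u / v).re, ?_⟩
      apply Complex.ext
      · simp only [Complex.add_re, Complex.mul_re, Complex.ofReal_re, Complex.ofReal_im,
          zero_mul, sub_zero]
        ring
      · simp only [Complex.add_im, Complex.mul_im, Complex.ofReal_re, Complex.ofReal_im,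
          zero_mul, add_zero]
        field_simp
    refine ⟨(x, y), ?_⟩
    rw [hTapply]
    have hstep : (x : ℂ) * u + (y : ℂ) * v = ((x : ℂ) * (u / v) + (y : ℂ)) * v := by
      field_simp
    rw [hstep, hxy]
    exact div_mul_cancel₀ z hv
  -- the homeomorphism
  set eL : (ℝ × ℝ) ≃ₗ[ℝ] ℂ := LinearEquiv.ofBijective T ⟨hTinj, hTsurj⟩ with heL
  set eC : (ℝ × ℝ) ≃L[ℝ] ℂ := eL.toContinuousLinearEquiv with heC
  set h : (ℝ × ℝ) ≃ₜ ℂ := eC.toHomeomorph with hh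
  have happly : ∀ p : ℝ × ℝ, h p = T p := fun p => rfl
  -- the covering map f
  set f : ℂ → ℂ := fun z => Complex.exp (2 * Real.pi * Complex.I * z) with hf
  set G : Set ℂ := {z : ℂ | ∃ n m : ℤ, z = ξ ^ n * η ^ m} with hG
  have hc : (2 * Real.pi * Complex.I : ℂ) ≠ 0 := by
    simp [Complex.ext_iff, Real.pi_ne_zero]
  -- f ∘ h maps S to G exactly
  have hfT : ∀ z : ℂ, f z ∈ G ↔ z ∈ h '' (Kron10.S α β : Set (ℝ × ℝ)) := by
    have hval : ∀ k n m : ℤ, h (((n : ℝ) + (k : ℝ) * α, (m : ℝ) + (k : ℝ) * β) : ℝ × ℝ) =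
        (n : ℂ) * u + (m : ℂ) * v + (k : ℂ) := by
      intro k n m
      rw [happly, hTapply]
      push_cast
      linear_combination (k : ℂ) * hαβ
    have hexp : ∀ k n m : ℤ, f ((n : ℂ) * u + (m : ℂ) * v + (k : ℂ)) = ξ ^ n * η ^ m := by
      intro k n m
      rw [hf]
      simp only
      rw [show 2 * (Real.pi : ℂ) * Complex.I * ((n : ℂ) * u + (m : ℂ) * v + (k : ℂ)) =
        (n : ℂ) * (2 * Real.pi * Complex.I * u) + ((m : ℂ) * (2 * Real.pi * Complex.I * v) +
          (k : ℂ) * (2 * Real.pi * Complex.I)) from by ring]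
      rw [Complex.exp_add, Complex.exp_add, Complex.exp_int_mul, Complex.exp_int_mul,
        Complex.exp_int_mul_two_pi_mul_I, hξ, hη]
      ring
    intro z
    constructor
    · rintro ⟨n, m, hnm⟩
      have h2 : f ((n : ℂ) * u + (m : ℂ) * v + ((0 : ℤ) : ℂ)) = ξ ^ n * η ^ m := hexp 0 n m
      have h3 : f z = f ((n : ℂ) * u + (m : ℂ) * v + ((0 : ℤ) : ℂ)) := by rw [h2]; exact hnm
      rw [hf] at h3
      simp only at h3
      rw [Complex.exp_eq_exp_iff_exists_int] at h3
      obtain ⟨j, hj⟩ := h3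
      have hz : z = (n : ℂ) * u + (m : ℂ) * v + (j : ℂ) := by
        apply mul_left_cancel₀ hc
        push_cast at hj ⊢
        linear_combination hj
      refine ⟨(((n : ℤ) : ℝ) + ((j : ℤ) : ℝ) * α, ((m : ℤ) : ℝ) + ((j : ℤ) : ℝ) * β),
        Kron10.mem_S j n m, ?_⟩
      rw [hval j n m, hz]
    · rintro ⟨p, ⟨k, n, m, rfl⟩, rfl⟩
      exact ⟨n, m, by rw [hval k n m, hexp k n m]⟩
  have hpre : f ⁻¹' G = h '' (Kron10.S α β : Set (ℝ × ℝ)) := Set.ext fun z => hfT z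
  -- openness and dense range of f
  have hfopen : IsOpenMap f := by
    have h1 : IsOpenMap fun z : ℂ => 2 * Real.pi * Complex.I * z :=
      (Homeomorph.mulLeft₀ _ hc).isOpenMap
    exact Complex.isOpenMap_exp.comp h1
  have hfcont : Continuous f := Complex.continuous_exp.comp (continuous_const.mul continuous_id)
  have hfdr : DenseRange f := by
    have h1 : Set.range f = Set.range Complex.exp := by
      apply Set.Subset.antisymm
      · rintro z ⟨w, rfl⟩; exact ⟨_, rfl⟩
      · rintro z ⟨w, rfl⟩
        exact ⟨w / (2 * Real.pi * Complex.I), by rw [hf]; simp only; rw [mul_div_cancel₀ _ hc]⟩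
    rw [DenseRange, h1, Complex.range_exp]
    exact dense_compl_singleton 0
  constructor
  · -- dense → independent
    intro hd
    apply Kron10.indep_of_dense (α := α) (β := β)
    rw [← h.isDenseEmbedding.dense_image, ← hpre]
    intro z
    rw [mem_closure_iff]
    intro U hU hzU
    obtain ⟨w, hwfU, hwG⟩ := hd.inter_open_nonempty (f '' U) (hfopen U hU)
      ((Set.nonempty_of_mem hzU).image f)
    obtain ⟨z', hz'U, hz'⟩ := hwfU
    exact ⟨z', hz'U, by rw [Set.mem_preimage, hz']; exact hwG⟩
  · -- independent → dense
    intro hind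
    have hdS : Dense (Kron10.S α β : Set (ℝ × ℝ)) := Kron10.dense_of_indep hind
    have hdM : Dense (h '' (Kron10.S α β : Set (ℝ × ℝ))) := h.isDenseEmbedding.dense_image.mpr hdS
    rw [← hpre] at hdM
    have := hfdr.dense_image hfcont hdM
    exact this.mono (Set.image_preimage_subset f G)

end
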